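/- Suppose φ : X → (−∞,∞] satisfies: for all x₀, x₁ in the domain of φ there is a curve γ from x₀ to x₁ such that Φ(τ,x₀;γ(t)) ≤ (1−t)Φ(τ,x₀;x₀) + tΦ(τ,x₀;x₁) − (1/p)(λ + τ^{1−p})t(1−t^{p−1})d^p(x₀,x₁) for all admissible τ and t ∈ [0,1]. Then the local slope admits the global representation |∂φ|(x) = sup_{y≠x} [ (φ(x)−φ(y))/d(x,y) + (λ/p)d^{p−1}(x,y) ]₊ for all x in the domain of φ. In particular, when λ ≥ 0, |∂φ|(x) equals the global slope 𝔩_φ(x) = sup_{y≠x}[φ(x)−φ(y)]₊/d(x,y). -/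

import Mathlib

open Filter Topology
open scoped ENNReal

/-- The nonnegative part of an extended real, as an extended nonnegative real. -/
noncomputable def erealPosPart (x : EReal) : ℝ≥0∞ :=
  if x = ⊤ then ⊤ else ENNReal.ofReal x.toReal

/-- The forward topology generated by forward balls of an asymmetric metric. -/
def fwdTop {X : Type*} (d : X → X → ℝ) : TopologicalSpace X :=
  TopologicalSpace.generateFrom
    {s : Set X | ∃ x : X, ∃ r : ℝ, 0 < r ∧ s = {y | d x y < r}}

/-- The local (descending) slope `|∂φ|`. -/
noncomputable def localSlope {X : Type*} (d : X → X → ℝ) (φ : X → EReal) (x : X) : ℝ≥0∞ :=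
  if φ x = ⊤ then ⊤ else
    Filter.limsup (fun y => erealPosPart (φ x - φ y) / ENNReal.ofReal (d x y))
      (@nhdsWithin X (fwdTop d) x {x}ᶜ)

/-- The global slope `𝔩_φ(x) = sup_{y≠x} [φ(x)−φ(y)]₊/d(x,y)`. -/
noncomputable def globalSlope {X : Type*} (d : X → X → ℝ) (φ : X → EReal) (x : X) : ℝ≥0∞ :=
  if φ x = ⊤ then ⊤ else
    ⨆ y : X, ⨆ _ : y ≠ x, erealPosPart (φ x - φ y) / ENNReal.ofReal (d x y)


set_option maxHeartbeats 1000000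

section helpers
variable {X : Type*} (d : X → X → ℝ)

lemma erealPosPart_coe (r : ℝ) : erealPosPart (r : EReal) = ENNReal.ofReal r := by
  simp [erealPosPart]

lemma erealPosPart_bot : erealPosPart ⊥ = 0 := by
  simp [erealPosPart]

lemma fwd_ball_mem_nhds (hd_eq : ∀ x y, d x y = 0 ↔ x = y) (x : X) {r : ℝ} (hr : 0 < r) :
    {y | d x y < r} ∈ @nhds X (fwdTop d) x := by
  letI := fwdTop d
  have hopen : IsOpen {y | d x y < r} :=
    TopologicalSpace.isOpen_generateFrom_of_mem ⟨x, r, hr, rfl⟩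
  exact hopen.mem_nhds (by simp [Set.mem_setOf_eq, (hd_eq x x).mpr rfl, hr])

lemma fwd_open_ball (hd_tri : ∀ x y z, d x z ≤ d x y + d y z) {U : Set X}
    (hU : TopologicalSpace.GenerateOpen
      {s : Set X | ∃ x : X, ∃ r : ℝ, 0 < r ∧ s = {y | d x y < r}} U) :
    ∀ x ∈ U, ∃ r > (0:ℝ), {y | d x y < r} ⊆ U := by
  induction hU with
  | basic s hs =>
    rintro x hx
    obtain ⟨z, r, hr, rfl⟩ := hs
    refine ⟨r - d z x, by simp only [Set.mem_setOf_eq] at hx; linarith, fun y hy => ?_⟩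
    simp only [Set.mem_setOf_eq] at hx hy ⊢
    calc d z y ≤ d z x + d x y := hd_tri z x y
    _ < r := by linarith
  | univ => exact fun x _ => ⟨1, one_pos, fun _ _ => trivial⟩
  | inter s t _ _ ihs iht =>
    rintro x ⟨hxs, hxt⟩
    obtain ⟨r1, hr1, h1⟩ := ihs x hxs
    obtain ⟨r2, hr2, h2⟩ := iht x hxt
    refine ⟨min r1 r2, lt_min hr1 hr2, fun y hy => ?_⟩
    simp only [Set.mem_setOf_eq, lt_min_iff] at hy
    exact ⟨h1 hy.1, h2 hy.2⟩
  | sUnion S hS ih =>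
    rintro x ⟨s, hs, hxs⟩
    obtain ⟨r, hr, h⟩ := ih s hs x hxs
    exact ⟨r, hr, fun y hy => ⟨s, hs, h hy⟩⟩

lemma fwd_nhds_basis (hd_eq : ∀ x y, d x y = 0 ↔ x = y)
    (hd_tri : ∀ x y z, d x z ≤ d x y + d y z) (x : X) :
    (@nhds X (fwdTop d) x).HasBasis (fun r : ℝ => 0 < r) (fun r => {y | d x y < r}) := by
  letI := fwdTop d
  constructor
  intro S
  constructor
  · intro hS
    rw [mem_nhds_iff] at hS
    obtain ⟨U, hUS, hUopen, hxU⟩ := hS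
    obtain ⟨r, hr, hball⟩ := fwd_open_ball d hd_tri hUopen x hxU
    exact ⟨r, hr, hball.trans hUS⟩
  · rintro ⟨r, hr, h⟩
    exact mem_of_superset (fwd_ball_mem_nhds d hd_eq x hr) h

lemma key_reduce (p lam s t e D rx ry : ℝ) (φt : EReal) (hbot : φt ≠ ⊥)
    (key : φt + ((e ^ p / (p * s⁻¹) : ℝ) : EReal)
      ≤ ((1 - t : ℝ) : EReal) * (((rx : ℝ) : EReal) + (((0:ℝ) ^ p / (p * s⁻¹) : ℝ) : EReal))
        + ((t : ℝ) : EReal) * (((ry : ℝ) : EReal) + ((D ^ p / (p * s⁻¹) : ℝ) : EReal))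
        - ((1 / p * (lam + 1 / s⁻¹) * t * (1 - t ^ (p - 1)) * D ^ p : ℝ) : EReal))
    (hp : 1 < p) :
    φt ≠ ⊤ ∧ (rx - φt.toReal ≥ t * (rx - ry) + lam / p * t * (1 - t ^ (p - 1)) * D ^ p
      + s / p * (e ^ p - t * t ^ (p - 1) * D ^ p)) := by
  have hp0 : (0:ℝ) < p := by linarith
  have hnt : φt ≠ ⊤ := by
    intro h
    rw [h] at key
    rw [EReal.top_add_coe] at key
    exact absurd key (not_le.mpr (EReal.coe_lt_top _))
  constructor
  · exact hnt
  · lift φt to ℝ using ⟨hnt, hbot⟩ with rt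
    rw [show ((rt:EReal)).toReal = rt from rfl]
    norm_cast at key
    have h0 : (0:ℝ) ^ p = 0 := Real.zero_rpow (by positivity)
    rw [h0] at key
    have h1 : e ^ p / (p * s⁻¹) = s * e ^ p / p := by field_simp
    have h2 : D ^ p / (p * s⁻¹) = s * D ^ p / p := by field_simp
    have h3 : 1 / s⁻¹ = s := by rw [one_div, inv_inv]
    rw [h1, h2, h3] at key
    have hid : (1 - t) * (rx + 0 / (p * s⁻¹)) + t * (ry + s * D ^ p / p)
        - 1 / p * (lam + s) * t * (1 - t ^ (p - 1)) * D ^ p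
        = rx - (t * (rx - ry) + lam / p * t * (1 - t ^ (p - 1)) * D ^ p
          + s / p * (e ^ p - t * t ^ (p - 1) * D ^ p)) + s * e ^ p / p := by ring
    rw [hid] at key
    linarith [key]

end helpers

lemma aux_pos (Rv Dq Mq Cq t T : ℝ) (hRt : Rv ≥ t * (Dq * Mq) - Cq * (t * T))
    (h5 : t * (Cq * T) ≤ t * (Dq * Mq / 2)) (hDM0 : 0 < t * (Dq * Mq)) : 0 < Rv := by
  nlinarith [hRt, h5, hDM0]

lemma aux_low (Rv Dq Mq Cq t T e ε : ℝ) (hRt : Rv ≥ t * (Dq * Mq) - Cq * (t * T))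
    (h8 : (Mq - ε) * e ≤ (Mq - ε) * (t * Dq)) (h9 : Cq * T * t ≤ ε * Dq * t) :
    (Mq - ε) * e ≤ Rv := by nlinarith [hRt, h8, h9]

lemma slope_formula {X : Type*} (d : X → X → ℝ)
    (hd_nonneg : ∀ x y, 0 ≤ d x y)
    (hd_eq : ∀ x y, d x y = 0 ↔ x = y)
    (hd_tri : ∀ x y z, d x z ≤ d x y + d y z)
    (p lam : ℝ) (hp : 1 < p)
    (φ : X → EReal) (hbot : ∀ x, φ x ≠ ⊥)
    (Φ : ℝ → X → X → EReal)
    (hΦ : ∀ τ x y, Φ τ x y = φ y + ((d x y ^ p / (p * τ ^ (p - 1)) : ℝ) : EReal))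
    (hconv : ∀ x₀ x₁ : X, φ x₀ ≠ ⊤ → φ x₁ ≠ ⊤ → ∃ γ : ℝ → X, γ 0 = x₀ ∧ γ 1 = x₁ ∧
      ∀ τ : ℝ, 0 < τ → max (-lam) 0 * τ ^ (p - 1) < 1 → ∀ t ∈ Set.Icc (0:ℝ) 1,
        Φ τ x₀ (γ t) ≤ ((1 - t : ℝ) : EReal) * Φ τ x₀ x₀ + ((t : ℝ) : EReal) * Φ τ x₀ x₁
          - ((1 / p * (lam + 1 / τ ^ (p - 1)) * t * (1 - t ^ (p - 1)) * d x₀ x₁ ^ p : ℝ)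
            : EReal)) :
    ∀ x : X, φ x ≠ ⊤ →
      localSlope d φ x = ⨆ y : X, ⨆ _ : y ≠ x,
        erealPosPart ((φ x - φ y) * (((d x y)⁻¹ : ℝ) : EReal)
          + ((lam / p * d x y ^ (p - 1) : ℝ) : EReal)) := by
  intro x hx
  letI := fwdTop d
  have hp0 : (0:ℝ) < p := by linarith
  have hp1 : (0:ℝ) < p - 1 := by linarith
  have hxx : d x x = 0 := (hd_eq x x).mpr rfl
  set rx := (φ x).toReal with hrx_def
  have hrx : φ x = (rx : EReal) := (EReal.coe_toReal hx (hbot x)).symm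
  set F := @nhdsWithin X (fwdTop d) x {x}ᶜ with hF
  set f := fun y => erealPosPart (φ x - φ y) / ENNReal.ofReal (d x y) with hf
  have hL : localSlope d φ x = Filter.limsup f F := by rw [localSlope, if_neg hx]
  set RHS := ⨆ y : X, ⨆ _ : y ≠ x,
      erealPosPart ((φ x - φ y) * (((d x y)⁻¹ : ℝ) : EReal)
        + ((lam / p * d x y ^ (p - 1) : ℝ) : EReal)) with hRHS
  -- positivity of d x y for y ≠ x
  have hDpos : ∀ y : X, y ≠ x → 0 < d x y := by
    intro y hy
    rcases lt_or_eq_of_le (hd_nonneg x y) with h | h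
    · exact h
    · exact absurd ((hd_eq x y).mp h.symm).symm hy
  -- value of f at points with finite φ
  have hfval : ∀ y : X, y ≠ x → φ y ≠ ⊤ →
      f y = ENNReal.ofReal ((rx - (φ y).toReal) / d x y) := by
    intro y hy hyt
    have hry : φ y = ((φ y).toReal : EReal) := (EReal.coe_toReal hyt (hbot y)).symm
    have : φ x - φ y = ((rx - (φ y).toReal : ℝ) : EReal) := by
      rw [hrx, hry]; norm_cast
    rw [hf]
    simp only
    rw [this, erealPosPart_coe, ENNReal.ofReal_div_of_pos (hDpos y hy)]
  -- value of f when φ y = ⊤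
  have hftop : ∀ y : X, φ y = ⊤ → f y = 0 := by
    intro y hyt
    rw [hf]
    simp only
    rw [hrx, hyt]
    rw [show ((rx : EReal) - ⊤) = ⊥ by simp]
    rw [erealPosPart_bot, ENNReal.zero_div]
  -- value of RHS term for finite φ y
  have htermval : ∀ y : X, y ≠ x → φ y ≠ ⊤ →
      erealPosPart ((φ x - φ y) * (((d x y)⁻¹ : ℝ) : EReal)
        + ((lam / p * d x y ^ (p - 1) : ℝ) : EReal))
      = ENNReal.ofReal ((rx - (φ y).toReal) * (d x y)⁻¹ + lam / p * d x y ^ (p - 1)) := by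
    intro y hy hyt
    have hry : φ y = ((φ y).toReal : EReal) := (EReal.coe_toReal hyt (hbot y)).symm
    have h1 : φ x - φ y = ((rx - (φ y).toReal : ℝ) : EReal) := by
      rw [hrx, hry]; norm_cast
    rw [h1]
    norm_cast

  have hdirA : Filter.limsup f F ≤ RHS := by
    refine ENNReal.le_of_forall_pos_le_add fun ε hε hRT => ?_
    have hεr : (0:ℝ) < (ε:ℝ) := hε
    -- choose δ > 0 such that (max (-lam) 0 / p) * r ^ (p-1) ≤ ε for 0 ≤ r < δ
    obtain ⟨δ, hδ0, hδ⟩ : ∃ δ > (0:ℝ), ∀ r : ℝ, 0 ≤ r → r < δ →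
        max (-lam) 0 / p * r ^ (p - 1) ≤ (ε:ℝ) := by
      rcases eq_or_lt_of_le (le_max_right (-lam) 0) with h | h
      · exact ⟨1, one_pos, fun r hr0 hr1 => by
          rw [← h]; simp⟩
      · set c := max (-lam) 0 with hc
        refine ⟨((ε:ℝ) * p / c) ^ ((p-1)⁻¹ : ℝ), by positivity, fun r hr0 hr1 => ?_⟩
        have h2 : r ^ (p-1) ≤ (((ε:ℝ) * p / c) ^ ((p-1)⁻¹ : ℝ)) ^ (p-1) :=
          Real.rpow_le_rpow hr0 hr1.le hp1.le
        rw [Real.rpow_inv_rpow (by positivity) (ne_of_gt hp1)] at h2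
        calc c / p * r ^ (p-1) ≤ c / p * ((ε:ℝ) * p / c) := by
              apply mul_le_mul_of_nonneg_left h2; positivity
        _ = (ε:ℝ) := by field_simp
    have hev : ∀ᶠ y in F, f y ≤ RHS + (ε : ℝ≥0∞) := by
      have hball : {y | d x y < δ} ∈ @nhds X (fwdTop d) x := fwd_ball_mem_nhds d hd_eq x hδ0
      filter_upwards [self_mem_nhdsWithin, mem_nhdsWithin_of_mem_nhds hball] with y hy hyd
      have hyx : y ≠ x := hy
      by_cases hyt : φ y = ⊤
      · rw [hftop y hyt]; exact zero_le
      · have hD := hDpos y hyx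
        set ry := (φ y).toReal
        set D := d x y with hDdef
        have hkey : (rx - ry) / D ≤ ((rx - ry) * D⁻¹ + lam / p * D ^ (p-1))
            + max (-lam) 0 / p * D ^ (p-1) := by
          rw [div_eq_mul_inv]
          have h2 : (0:ℝ) ≤ lam + max (-lam) 0 := by
            have := le_max_left (-lam) 0; linarith
          have hDp : (0:ℝ) ≤ D ^ (p-1) := Real.rpow_nonneg (hd_nonneg x y) _
          have h3 : lam / p * D ^ (p-1) + max (-lam) 0 / p * D ^ (p-1)
              = (lam + max (-lam) 0) * p⁻¹ * D ^ (p-1) := by ring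
          nlinarith [mul_nonneg (mul_nonneg h2 (inv_nonneg.2 hp0.le)) hDp, h3]
        calc f y = ENNReal.ofReal ((rx - ry) / D) := hfval y hyx hyt
        _ ≤ ENNReal.ofReal (((rx - ry) * D⁻¹ + lam / p * D ^ (p-1))
              + max (-lam) 0 / p * D ^ (p-1)) := ENNReal.ofReal_le_ofReal hkey
        _ ≤ ENNReal.ofReal ((rx - ry) * D⁻¹ + lam / p * D ^ (p-1))
              + ENNReal.ofReal (max (-lam) 0 / p * D ^ (p-1)) := ENNReal.ofReal_add_le
        _ ≤ RHS + (ε : ℝ≥0∞) := by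
            gcongr
            · rw [← htermval y hyx hyt]
              exact le_iSup₂ (f := fun y (_ : y ≠ x) =>
                erealPosPart ((φ x - φ y) * (((d x y)⁻¹ : ℝ) : EReal)
                  + ((lam / p * d x y ^ (p - 1) : ℝ) : EReal))) y hyx
            · calc ENNReal.ofReal (max (-lam) 0 / p * D ^ (p-1))
                  ≤ ENNReal.ofReal (ε:ℝ) :=
                    ENNReal.ofReal_le_ofReal (hδ D (hd_nonneg x y) hyd)
              _ = (ε : ℝ≥0∞) := ENNReal.ofReal_coe_nnreal
    exact Filter.limsup_le_of_le (by isBoundedDefault) hev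
  -- auxiliary: t * t^(p-1) * D^p = (t*D)^p
  have htT : ∀ y : X, ∀ t : ℝ, 0 < t → t * t ^ (p-1) * d x y ^ p = (t * d x y) ^ p := by
    intro y t ht0
    have e2 : t ^ (1:ℝ) * t ^ (p-1) = t ^ p := by
      rw [← Real.rpow_add ht0]; norm_num
    calc t * t ^ (p-1) * d x y ^ p = t ^ (1:ℝ) * t ^ (p-1) * d x y ^ p := by
          rw [Real.rpow_one]
    _ = t ^ p * d x y ^ p := by rw [e2]
    _ = (t * d x y) ^ p := (Real.mul_rpow ht0.le (hd_nonneg x y)).symm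
  rw [hL]
  refine le_antisymm hdirA (iSup₂_le fun y hyx => ?_)
  by_cases hyt : φ y = ⊤
  · -- the term vanishes
    have hD := hDpos y hyx
    have h1 : (φ x - φ y) * (((d x y)⁻¹ : ℝ) : EReal) = ⊥ := by
      rw [hyt, hrx, show ((rx : EReal) - ⊤) = ⊥ by simp]
      exact EReal.bot_mul_coe_of_pos (inv_pos.mpr hD)
    rw [h1, EReal.bot_add, erealPosPart_bot]
    exact zero_le
  · have hD := hDpos y hyx
    set ry := (φ y).toReal with hry_def
    have hry : φ y = (ry : EReal) := (EReal.coe_toReal hyt (hbot y)).symm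
    set D := d x y with hDdef
    rw [htermval y hyx hyt]
    set c := max (-lam) 0 with hc
    set M := (rx - ry) * D⁻¹ + lam / p * D ^ (p-1) with hM
    rcases le_or_gt M 0 with hM0 | hM0
    · rw [ENNReal.ofReal_eq_zero.mpr hM0]; exact zero_le
    obtain ⟨γ, hγ0, hγ1, hγ⟩ := hconv x y hx hyt
    -- the key inequality, for all admissible parameters
    have hkey : ∀ t : ℝ, 0 < t → t ≤ 1 → ∀ s : ℝ, c < s →
        φ (γ t) ≠ ⊤ ∧ rx - (φ (γ t)).toReal ≥ t * (rx - ry)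
          + lam / p * t * (1 - t ^ (p-1)) * D ^ p
          + s / p * (d x (γ t) ^ p - t * t ^ (p-1) * D ^ p) := by
      intro t ht0 ht1 s hs
      have hs0 : 0 < s := lt_of_le_of_lt (le_max_right (-lam) 0) hs
      set τ := s ^ (-(p-1)⁻¹ : ℝ) with hτ
      have hτ0 : 0 < τ := Real.rpow_pos_of_pos hs0 _
      have hτp : τ ^ (p - 1) = s⁻¹ := by
        rw [hτ, ← Real.rpow_mul hs0.le,
          show -(p-1)⁻¹ * (p-1) = -1 by field_simp, Real.rpow_neg_one]
      have hadm : c * τ ^ (p-1) < 1 := by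
        rw [hτp, ← div_eq_mul_inv]
        exact (div_lt_one hs0).mpr hs
      have happ := hγ τ hτ0 hadm t ⟨ht0.le, ht1⟩
      rw [hΦ, hΦ, hΦ, hxx, hrx, hry, hτp] at happ
      exact key_reduce p lam s t (d x (γ t)) D rx ry (φ (γ t)) (hbot _) happ hp
    -- step 1: the curve stays within t * D of x
    have hle : ∀ t : ℝ, 0 < t → t ≤ 1 → d x (γ t) ≤ t * D := by
      intro t ht0 ht1
      by_contra hcon
      push_neg at hcon
      have hep : (t * D) ^ p < d x (γ t) ^ p :=
        Real.rpow_lt_rpow (by positivity) hcon hp0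
      set e := d x (γ t) with he
      set K := t * (rx - ry) + lam / p * t * (1 - t ^ (p-1)) * D ^ p with hK
      set R := rx - (φ (γ t)).toReal with hR
      have hδ2 : 0 < e ^ p - (t*D) ^ p := by linarith
      set s := max (c + 1) ((R - K + 1) * p / (e ^ p - (t*D)^p)) with hs
      have hs1 : c < s := lt_of_lt_of_le (lt_add_one _) (le_max_left _ _)
      obtain ⟨-, hkey2⟩ := hkey t ht0 ht1 s hs1
      rw [htT y t ht0] at hkey2
      have hs2 : (R - K + 1) * p / (e ^ p - (t*D)^p) ≤ s := le_max_right _ _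
      have h4 : (R - K + 1) * p ≤ s * (e ^ p - (t*D)^p) := by
        have h5 := mul_le_mul_of_nonneg_right hs2 hδ2.le
        rwa [div_mul_cancel₀ _ (ne_of_gt hδ2)] at h5
      have h6 : R - K + 1 ≤ s / p * (e ^ p - (t*D)^p) := by
        rw [div_mul_eq_mul_div, le_div_iff₀ hp0]; linarith
      linarith [hkey2, h6]
    -- step 2: limit τ → λ₋^{-1/(p-1)}
    have hR2 : ∀ t : ℝ, 0 < t → t ≤ 1 →
        rx - (φ (γ t)).toReal ≥ t * (rx - ry) + lam / p * t * (1 - t ^ (p-1)) * D ^ p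
          - c / p * (t * t ^ (p-1) * D ^ p - d x (γ t) ^ p) := by
      intro t ht0 ht1
      set e := d x (γ t) with he
      have hE : 0 ≤ t * t ^ (p-1) * D ^ p - e ^ p := by
        have h1 : e ^ p ≤ (t*D) ^ p :=
          Real.rpow_le_rpow (hd_nonneg _ _) (hle t ht0 ht1) hp0.le
        have h2 := htT y t ht0
        linarith
      set E := t * t ^ (p-1) * D ^ p - e ^ p with hEdef
      set K := t * (rx - ry) + lam / p * t * (1 - t ^ (p-1)) * D ^ p with hK
      set R := rx - (φ (γ t)).toReal with hR
      by_contra hcon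
      push_neg at hcon
      set g := K - c / p * E - R with hg
      have hg0 : 0 < g := by rw [hg]; linarith
      have hE1 : (0:ℝ) < E + 1 := by linarith
      set ε := g * p / (2 * (E + 1)) with hε
      have hε0 : 0 < ε := by positivity
      obtain ⟨-, h⟩ := hkey t ht0 ht1 (c + ε) (lt_add_of_pos_right _ hε0)
      have hEe : e ^ p - t * t ^ (p-1) * D ^ p = -E := by rw [hEdef]; ring
      rw [hEe] at h
      -- h : R ≥ K + (c+ε)/p * (-E)
      have h7 : ε / p * E = g * E / (2 * (E + 1)) := by
        rw [hε]; field_simp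
      have h8 : g * E / (2 * (E + 1)) ≤ g / 2 := by
        rw [div_le_div_iff₀ (by linarith) (by norm_num)]
        nlinarith [hg0, hE]
      have h9 : (c + ε) / p * (-E) = -(c / p * E) - ε / p * E := by ring
      rw [h9] at h
      linarith [h, h7, h8]
    -- combined lower bound along the curve
    set C := 2 * |lam| / p * D ^ p with hC
    have hC0 : 0 ≤ C := by
      rw [hC]
      have : (0:ℝ) ≤ D ^ p := Real.rpow_nonneg (hd_nonneg x y) _
      positivity
    have hDM : D * M = (rx - ry) + lam / p * D ^ p := by
      have e1 : D ^ (1:ℝ) * D ^ (p-1) = D ^ p := by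
        rw [← Real.rpow_add hD]; norm_num
      rw [Real.rpow_one] at e1
      calc D * M = (rx - ry) * (D * D⁻¹) + lam / p * (D * D ^ (p-1)) := by rw [hM]; ring
      _ = (rx - ry) + lam / p * D ^ p := by rw [mul_inv_cancel₀ (ne_of_gt hD), e1]; ring
    have hRC : ∀ t : ℝ, 0 < t → t ≤ 1 →
        rx - (φ (γ t)).toReal ≥ t * (D * M) - C * (t * t ^ (p-1)) := by
      intro t ht0 ht1
      have h1 := hR2 t ht0 ht1
      have hTnn : (0:ℝ) ≤ t ^ (p-1) := Real.rpow_nonneg ht0.le _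
      have hDpn : (0:ℝ) ≤ D ^ p := Real.rpow_nonneg (hd_nonneg x y) _
      have hepn : (0:ℝ) ≤ d x (γ t) ^ p := Real.rpow_nonneg (hd_nonneg _ _) _
      have hcabs : c ≤ |lam| := max_le (neg_le_abs lam) (abs_nonneg lam)
      have hlabs : lam ≤ |lam| := le_abs_self lam
      have hcnn : (0:ℝ) ≤ c := le_max_right _ _
      have hP1 : 0 ≤ (2 * |lam| - lam - c) * p⁻¹ * (t * t ^ (p-1) * D ^ p) := by
        apply mul_nonneg (mul_nonneg (by linarith) (inv_nonneg.2 hp0.le))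
        positivity
      have hP2 : 0 ≤ c * p⁻¹ * d x (γ t) ^ p :=
        mul_nonneg (mul_nonneg hcnn (inv_nonneg.2 hp0.le)) hepn
      rw [hDM]
      have hid : t * (rx - ry) + lam / p * t * (1 - t ^ (p-1)) * D ^ p
            - c / p * (t * t ^ (p-1) * D ^ p - d x (γ t) ^ p)
          = t * ((rx - ry) + lam / p * D ^ p) - C * (t * t ^ (p-1))
            + ((2 * |lam| - lam - c) * p⁻¹ * (t * t ^ (p-1) * D ^ p)
              + c * p⁻¹ * d x (γ t) ^ p)
            - (2 * |lam| * p⁻¹ * (t * t ^ (p-1)) * D ^ p - C * (t * t ^ (p-1))) := by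
        rw [hC]; ring
      have hzero : 2 * |lam| * p⁻¹ * (t * t ^ (p-1)) * D ^ p - C * (t * t ^ (p-1)) = 0 := by
        rw [hC]; ring
      linarith [h1, hP1, hP2, hid.ge, hid.le, hzero.ge, hzero.le]
    -- conclude via the limsup
    refine ENNReal.le_of_forall_pos_le_add fun ε hε hlt => ?_
    have hεr : (0:ℝ) < (ε:ℝ) := hε
    suffices hsuff : ENNReal.ofReal (M - (ε:ℝ)) ≤ Filter.limsup f F by
      rcases le_or_gt M (ε:ℝ) with hMε | hMε
      · calc ENNReal.ofReal M ≤ ENNReal.ofReal (ε:ℝ) := ENNReal.ofReal_le_ofReal hMε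
        _ = (ε : ℝ≥0∞) := ENNReal.ofReal_coe_nnreal
        _ ≤ Filter.limsup f F + ε := le_add_self
      · rw [show M = (M - (ε:ℝ)) + (ε:ℝ) by ring,
          ENNReal.ofReal_add (by linarith) hεr.le, ENNReal.ofReal_coe_nnreal]
        exact add_le_add_left hsuff _
    -- choose the threshold t₁
    set m := min ((ε:ℝ) * D) (D * M / 2) with hm
    have hm0 : 0 < m := lt_min (by positivity) (by positivity)
    obtain ⟨t₁, ht₁0, ht₁1, ht₁⟩ : ∃ t₁ : ℝ, 0 < t₁ ∧ t₁ ≤ 1 ∧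
        ∀ t : ℝ, 0 < t → t < t₁ → C * t ^ (p-1) ≤ m := by
      rcases eq_or_lt_of_le hC0 with h | h
      · exact ⟨1, one_pos, le_refl 1, fun t ht0 ht1 => by
          rw [← h, zero_mul]; exact hm0.le⟩
      · refine ⟨min 1 ((m/C) ^ ((p-1)⁻¹ : ℝ)), lt_min one_pos (by positivity),
          min_le_left _ _, fun t ht0 htl => ?_⟩
        have h2 : t ^ (p-1) ≤ ((m/C) ^ ((p-1)⁻¹ : ℝ)) ^ (p-1) :=
          Real.rpow_le_rpow ht0.le
            (le_of_lt (lt_of_lt_of_le htl (min_le_right _ _))) hp1.le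
        rw [Real.rpow_inv_rpow (by positivity) (ne_of_gt hp1)] at h2
        calc C * t ^ (p-1) ≤ C * (m/C) := mul_le_mul_of_nonneg_left h2 hC0
        _ = m := by field_simp
    -- good properties along the curve
    have hgood : ∀ t : ℝ, 0 < t → t < t₁ →
        d x (γ t) ≤ t * D ∧ γ t ≠ x ∧
        ENNReal.ofReal (M - (ε:ℝ)) ≤ f (γ t) := by
      intro t ht0 htl
      have ht1 : t ≤ 1 := le_of_lt (lt_of_lt_of_le htl ht₁1)
      have hed : d x (γ t) ≤ t * D := hle t ht0 ht1
      have hCt := ht₁ t ht0 htl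
      have hCt1 : C * t ^ (p-1) ≤ (ε:ℝ) * D := le_trans hCt (min_le_left _ _)
      have hCt2 : C * t ^ (p-1) ≤ D * M / 2 := le_trans hCt (min_le_right _ _)
      have hRt := hRC t ht0 ht1
      have hDM0 : 0 < t * (D * M) := by positivity
      have h5 : t * (C * t ^ (p-1)) ≤ t * (D * M / 2) :=
        mul_le_mul_of_nonneg_left hCt2 ht0.le
      have hRpos : 0 < rx - (φ (γ t)).toReal := aux_pos _ _ _ _ _ _ hRt h5 hDM0
      have hne : γ t ≠ x := by
        intro h
        rw [h, ← hrx_def] at hRpos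
        linarith
      have hdp : 0 < d x (γ t) := hDpos _ hne
      have hft : φ (γ t) ≠ ⊤ := (hkey t ht0 ht1 (c + 1) (lt_add_one _)).1
      refine ⟨hed, hne, ?_⟩
      rw [hfval _ hne hft]
      apply ENNReal.ofReal_le_ofReal
      rw [le_div_iff₀ hdp]
      rcases le_or_gt (M - (ε:ℝ)) 0 with hMe | hMe
      · exact le_trans (mul_nonpos_iff.mpr (Or.inr ⟨hMe, hdp.le⟩)) hRpos.le
      · have h8 : (M - (ε:ℝ)) * d x (γ t) ≤ (M - (ε:ℝ)) * (t * D) :=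
          mul_le_mul_of_nonneg_left hed hMe.le
        have h9 : C * t ^ (p-1) * t ≤ (ε:ℝ) * D * t :=
          mul_le_mul_of_nonneg_right hCt1 ht0.le
        exact aux_low _ _ _ _ _ _ _ _ hRt h8 h9
    -- the curve tends to x within {x}ᶜ
    have htend : Filter.Tendsto γ (nhdsWithin (0:ℝ) (Set.Ioi 0)) F := by
      rw [hF, tendsto_nhdsWithin_iff]
      constructor
      · rw [(fwd_nhds_basis d hd_eq hd_tri x).tendsto_right_iff]
        intro r hr
        have hsm : ∀ᶠ t : ℝ in nhdsWithin (0:ℝ) (Set.Ioi 0), t < min t₁ (r / D) :=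
          mem_nhdsWithin_of_mem_nhds (Iio_mem_nhds (lt_min ht₁0 (by positivity)))
        filter_upwards [hsm, self_mem_nhdsWithin] with t htl ht0
        have ht0' : (0:ℝ) < t := ht0
        have h1 := (hgood t ht0' (lt_of_lt_of_le htl (min_le_left _ _))).1
        have h2 : t * D < r := by
          have h3 := lt_of_lt_of_le htl (min_le_right _ _)
          rw [lt_div_iff₀ hD] at h3
          linarith
        exact lt_of_le_of_lt h1 h2
      · have hsm : ∀ᶠ t : ℝ in nhdsWithin (0:ℝ) (Set.Ioi 0), t < t₁ :=
          mem_nhdsWithin_of_mem_nhds (Iio_mem_nhds ht₁0)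
        filter_upwards [hsm, self_mem_nhdsWithin] with t htl ht0
        exact (hgood t ht0 htl).2.1
    refine Filter.le_limsup_of_frequently_le ?_ (by isBoundedDefault)
    have hev2 : ∀ᶠ t in nhdsWithin (0:ℝ) (Set.Ioi 0),
        ENNReal.ofReal (M - (ε:ℝ)) ≤ f (γ t) := by
      have hsm : ∀ᶠ t : ℝ in nhdsWithin (0:ℝ) (Set.Ioi 0), t < t₁ :=
        mem_nhdsWithin_of_mem_nhds (Iio_mem_nhds ht₁0)
      filter_upwards [hsm, self_mem_nhdsWithin] with t htl ht0
      exact (hgood t ht0 htl).2.2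
    exact htend.frequently hev2.frequently

/-- Global formula for the local slope under the `(p,λ)`-convexity assumption on
the Moreau–Yosida functional `Φ`:
`|∂φ|(x) = sup_{y≠x} [(φ(x)−φ(y))/d(x,y) + (λ/p)d^{p−1}(x,y)]₊`,
and when `λ ≥ 0` the local slope equals the global slope. -/
theorem stmt_15 {X : Type*} (d : X → X → ℝ) (star : X) (Θ : ℝ → ℝ)
    -- asymmetric metric space axioms
    (hd_nonneg : ∀ x y, 0 ≤ d x y)
    (hd_eq : ∀ x y, d x y = 0 ↔ x = y)
    (hd_tri : ∀ x y z, d x z ≤ d x y + d y z)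
    -- pointed forward Θ-metric space structure
    (hΘ_one : ∀ r > (0:ℝ), 1 ≤ Θ r)
    (hΘ_mono : ∀ r s : ℝ, 0 < r → r ≤ s → Θ r ≤ Θ s)
    (hΘ : ∀ r > (0:ℝ), ∀ x y, d star x < r → d star y < r → d x y ≤ Θ r * d y x)
    -- forward completeness
    (hcomplete : ∀ u : ℕ → X,
      (∀ ε > (0:ℝ), ∃ N : ℕ, ∀ i j : ℕ, N < i → i ≤ j → d (u i) (u j) < ε) →
      ∃ x : X, Tendsto (fun i => d x (u i)) atTop (nhds 0))
    -- exponent, convexity parameter, and potential (proper, never −∞)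
    (p lam : ℝ) (hp : 1 < p)
    (φ : X → EReal) (hproper : ∃ x, φ x ≠ ⊤) (hbot : ∀ x, φ x ≠ ⊥)
    -- the Moreau–Yosida functional Φ(τ,x;y)
    (Φ : ℝ → X → X → EReal)
    (hΦ : ∀ τ x y, Φ τ x y = φ y + ((d x y ^ p / (p * τ ^ (p - 1)) : ℝ) : EReal))
    -- the convexity assumption: for x₀,x₁ ∈ 𝔇(φ) there is a curve γ from x₀ to
    -- x₁ along which Φ(τ,x₀;·) is (p, λ+τ^{1−p})-convex, for all
    -- τ ∈ (0, λ₋^{−1/(p−1)}) (i.e. all τ > 0 with λ₋·τ^{p−1} < 1)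
    (hconv : ∀ x₀ x₁ : X, φ x₀ ≠ ⊤ → φ x₁ ≠ ⊤ → ∃ γ : ℝ → X, γ 0 = x₀ ∧ γ 1 = x₁ ∧
      ∀ τ : ℝ, 0 < τ → max (-lam) 0 * τ ^ (p - 1) < 1 → ∀ t ∈ Set.Icc (0:ℝ) 1,
        Φ τ x₀ (γ t) ≤ ((1 - t : ℝ) : EReal) * Φ τ x₀ x₀ + ((t : ℝ) : EReal) * Φ τ x₀ x₁
          - ((1 / p * (lam + 1 / τ ^ (p - 1)) * t * (1 - t ^ (p - 1)) * d x₀ x₁ ^ p : ℝ)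
            : EReal)) :
    (∀ x : X, φ x ≠ ⊤ →
      localSlope d φ x = ⨆ y : X, ⨆ _ : y ≠ x,
        erealPosPart ((φ x - φ y) * (((d x y)⁻¹ : ℝ) : EReal)
          + ((lam / p * d x y ^ (p - 1) : ℝ) : EReal))) ∧
    (0 ≤ lam → ∀ x : X, φ x ≠ ⊤ → localSlope d φ x = globalSlope d φ x) := by
  
  have main := slope_formula d hd_nonneg hd_eq hd_tri p lam hp φ hbot Φ hΦ hconv
  refine ⟨main, fun hlam x hx => ?_⟩
  letI := fwdTop d
  have hp0 : (0:ℝ) < p := by linarith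
  have hDpos : ∀ y : X, y ≠ x → 0 < d x y := by
    intro y hy
    rcases lt_or_eq_of_le (hd_nonneg x y) with h | h
    · exact h
    · exact absurd ((hd_eq x y).mp h.symm).symm hy
  apply le_antisymm
  · rw [localSlope, if_neg hx, globalSlope, if_neg hx]
    refine Filter.limsup_le_of_le (by isBoundedDefault) ?_
    filter_upwards [self_mem_nhdsWithin] with y hy
    exact le_iSup₂ (f := fun y (_ : y ≠ x) =>
      erealPosPart (φ x - φ y) / ENNReal.ofReal (d x y)) y hy
  · rw [globalSlope, if_neg hx, main x hx]
    refine iSup₂_le fun y hyx => ?_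
    refine le_trans ?_ (le_iSup₂ (f := fun y (_ : y ≠ x) =>
      erealPosPart ((φ x - φ y) * (((d x y)⁻¹ : ℝ) : EReal)
        + ((lam / p * d x y ^ (p - 1) : ℝ) : EReal))) y hyx)
    have hD := hDpos y hyx
    by_cases hyt : φ y = ⊤
    · have hrx : φ x = ((φ x).toReal : EReal) := (EReal.coe_toReal hx (hbot x)).symm
      rw [hrx, hyt, show ((((φ x).toReal : ℝ) : EReal) - ⊤) = ⊥ by simp,
        erealPosPart_bot, ENNReal.zero_div]
      exact zero_le
    · have hrx : φ x = ((φ x).toReal : EReal) := (EReal.coe_toReal hx (hbot x)).symm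
      have hry : φ y = ((φ y).toReal : EReal) := (EReal.coe_toReal hyt (hbot y)).symm
      have h1 : φ x - φ y = (((φ x).toReal - (φ y).toReal : ℝ) : EReal) := by
        rw [hrx, hry]; norm_cast
      have hterm : erealPosPart ((φ x - φ y) * (((d x y)⁻¹ : ℝ) : EReal)
          + ((lam / p * d x y ^ (p - 1) : ℝ) : EReal))
          = ENNReal.ofReal (((φ x).toReal - (φ y).toReal) * (d x y)⁻¹
            + lam / p * d x y ^ (p - 1)) := by
        rw [h1]; norm_cast
      rw [hterm, h1, erealPosPart_coe, ← ENNReal.ofReal_div_of_pos hD]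
      apply ENNReal.ofReal_le_ofReal
      rw [div_eq_mul_inv]
      have h2 : (0:ℝ) ≤ lam / p * d x y ^ (p - 1) := by
        have := Real.rpow_nonneg (hd_nonneg x y) (p - 1)
        positivity
      linarith
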